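/- Let ε ∈ (0,1/2), δ ∈ (0,1], and let n be a positive integer with n ≥ (4/ε²)·log(1/δ). Let S be a binomial random variable with parameters n and success probability 1/2 + ε. Then P( S/n ≤ 1/2 + √(log(1/δ)/n) ) ≤ δ² ≤ δ. Consequently, after n independent comparisons between two arms b_i and b_j with P(b_i ≻ b_j) = 1/2 + ε, with probability at least 1 − δ the empirical win frequency of b_i exceeds 1/2 by more than the confidence radius c_n = √(log(1/δ)/n), so b_i is correctly identified as the winner. -/

import Mathlib

open Real Finset

/-- Hoeffding's lemma for a Bernoulli(p) variable, `0 < p < 1`, `0 ≤ x`. -/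
lemma hoeff_core (p : ℝ) (hp0 : 0 < p) (hp1 : p < 1) (x : ℝ) (hx : 0 ≤ x) :
    1 - p + p * Real.exp x ≤ Real.exp (p * x + x ^ 2 / 8) := by
  set den : ℝ → ℝ := fun y => 1 - p + p * Real.exp y with hden_def
  have hden_pos : ∀ y, 0 < den y := fun y => by
    have := Real.exp_pos y
    simp only [hden_def]
    nlinarith
  have hden : ∀ y, HasDerivAt den (p * Real.exp y) y := fun y => by
    exact ((Real.hasDerivAt_exp y).const_mul p).const_add (1 - p)
  set u : ℝ → ℝ := fun y => p * Real.exp y / den y with hu_def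
  have hu : ∀ y, HasDerivAt u
      ((p * Real.exp y * den y - p * Real.exp y * (p * Real.exp y)) / (den y) ^ 2) y := by
    intro y
    exact ((Real.hasDerivAt_exp y).const_mul p).div (hden y) (hden_pos y).ne'
  set w : ℝ → ℝ := fun y => p + y / 4 - u y with hw_def
  have hw : ∀ y, HasDerivAt w
      (1 / 4 - (p * Real.exp y * den y - p * Real.exp y * (p * Real.exp y)) / (den y) ^ 2) y := by
    intro y
    exact ((hasDerivAt_id y).div_const 4).const_add p |>.sub (hu y)
  have hw_mono : Monotone w := by
    apply monotone_of_hasDerivAt_nonneg hw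
    intro y
    have hd := hden_pos y
    have he := Real.exp_pos y
    simp only [Pi.zero_apply]
    rw [sub_nonneg, div_le_iff₀ (by positivity)]
    generalize den y = d at *
    nlinarith [sq_nonneg (d - 2 * (p * Real.exp y))]
  have hw0 : w 0 = 0 := by
    simp [hw_def, hu_def, hden_def]
  have hw_nonneg : ∀ y, 0 ≤ y → 0 ≤ w y := fun y hy => hw0 ▸ hw_mono hy
  set f : ℝ → ℝ := fun y => p * y + y ^ 2 / 8 - Real.log (den y) with hf_def
  have hf : ∀ y, HasDerivAt f (w y) y := by
    intro y
    have h1 : HasDerivAt (fun y : ℝ => p * y + y ^ 2 / 8) (p + 2 * y / 8) y := by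
      refine (((hasDerivAt_id y).const_mul p).add
        (((hasDerivAt_id y).pow 2).div_const 8)).congr_deriv ?_
      simp only [id, mul_one]
      norm_num
    have h2 : HasDerivAt (fun y => Real.log (den y)) (p * Real.exp y / den y) y :=
      (hden y).log (hden_pos y).ne'
    have := h1.sub h2
    refine this.congr_deriv ?_
    show _ = p + y / 4 - p * Real.exp y / den y
    ring
  have hf_mono : MonotoneOn f (Set.Ici 0) := by
    apply monotoneOn_of_hasDerivWithinAt_nonneg (f' := w) (convex_Ici 0)
    · exact fun y _ => (hf y).continuousAt.continuousWithinAt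
    · exact fun y hy => (hf y).hasDerivWithinAt
    · intro y hy
      rw [interior_Ici] at hy
      exact hw_nonneg y (le_of_lt hy)
  have hf0 : f 0 = 0 := by simp [hf_def, hden_def]
  have hfx : 0 ≤ f x := by
    have := hf_mono (Set.self_mem_Ici) (Set.mem_Ici.mpr hx) hx
    rw [hf0] at this; exact this
  have hlog : Real.log (den x) ≤ p * x + x ^ 2 / 8 := by
    simp only [hf_def] at hfx; linarith
  calc den x = Real.exp (Real.log (den x)) := (Real.exp_log (hden_pos x)).symm
    _ ≤ Real.exp (p * x + x ^ 2 / 8) := Real.exp_le_exp.mpr hlog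

/-- Per-trial Chernoff factor bound for a `Bernoulli(1/2+ε)` duel. -/
lemma mgf_bound (ε : ℝ) (hε0 : 0 < ε) (hε1 : ε < 1 / 2) (l : ℝ) (hl : 0 ≤ l) :
    (1 / 2 + ε) * Real.exp (-l) + (1 / 2 - ε) ≤
      Real.exp (-(1 / 2 + ε) * l + l ^ 2 / 8) := by
  have h := hoeff_core (1 / 2 - ε) (by linarith) (by linarith) l hl
  have h2 := mul_le_mul_of_nonneg_right h (le_of_lt (Real.exp_pos (-l)))
  calc (1 / 2 + ε) * Real.exp (-l) + (1 / 2 - ε)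
      = (1 - (1 / 2 - ε) + (1 / 2 - ε) * Real.exp l) * Real.exp (-l) := by
        have hee : Real.exp l * Real.exp (-l) = 1 := by rw [← Real.exp_add]; simp
        linear_combination (ε - 1 / 2) * hee
    _ ≤ Real.exp ((1 / 2 - ε) * l + l ^ 2 / 8) * Real.exp (-l) := h2
    _ = Real.exp (-(1 / 2 + ε) * l + l ^ 2 / 8) := by
        rw [← Real.exp_add]; ring_nf

theorem winner_identification_fixed_horizon
    (ε δ : ℝ) (hε : ε ∈ Set.Ioo (0 : ℝ) (1 / 2)) (hδ : δ ∈ Set.Ioc (0 : ℝ) 1)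
    (n : ℕ) (hn : 0 < n) (hn2 : (4 / ε ^ 2) * Real.log (1 / δ) ≤ (n : ℝ)) :
    ((∑ k ∈ Finset.range (n + 1),
        if (k : ℝ) / n ≤ 1 / 2 + Real.sqrt (Real.log (1 / δ) / n) then
          (n.choose k : ℝ) * (1 / 2 + ε) ^ k * (1 / 2 - ε) ^ (n - k)
        else 0) ≤ δ ^ 2 ∧ δ ^ 2 ≤ δ) ∧
      1 - δ ≤
        ∑ k ∈ Finset.range (n + 1),
          if 1 / 2 + Real.sqrt (Real.log (1 / δ) / n) < (k : ℝ) / n then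
            (n.choose k : ℝ) * (1 / 2 + ε) ^ k * (1 / 2 - ε) ^ (n - k)
          else 0 := by
  obtain ⟨hε0, hε1⟩ := hε
  obtain ⟨hδ0, hδ1⟩ := hδ
  set L := Real.log (1 / δ) with hL_def
  have hL0 : 0 ≤ L := Real.log_nonneg (by rw [le_div_iff₀ hδ0]; linarith)
  set c := Real.sqrt (L / n) with hc_def
  have hnpos : (0 : ℝ) < n := by exact_mod_cast hn
  have hc0 : 0 ≤ c := Real.sqrt_nonneg _
  have hkey : 4 * L ≤ n * ε ^ 2 := by
    have h := mul_le_mul_of_nonneg_right hn2 (show (0:ℝ) ≤ ε ^ 2 by positivity)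
    calc 4 * L = 4 / ε ^ 2 * L * ε ^ 2 := by field_simp
      _ ≤ n * ε ^ 2 := h
  have hcε : c ≤ ε / 2 := by
    rw [hc_def, show ε / 2 = Real.sqrt ((ε / 2) ^ 2) by rw [Real.sqrt_sq (by linarith)]]
    apply Real.sqrt_le_sqrt
    rw [div_le_iff₀ hnpos]
    nlinarith
  set l := 4 * (ε - c) with hl_def
  have hl0 : 0 ≤ l := by rw [hl_def]; linarith
  have hterm : ∀ k : ℕ, 0 ≤ (n.choose k : ℝ) * (1 / 2 + ε) ^ k * (1 / 2 - ε) ^ (n - k) :=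
    fun k => mul_nonneg (mul_nonneg (by positivity) (by positivity))
      (pow_nonneg (by linarith) _)
  -- termwise Chernoff bound
  have hM : ∀ k ∈ Finset.range (n + 1),
      (if (k : ℝ) / n ≤ 1 / 2 + c then
          (n.choose k : ℝ) * (1 / 2 + ε) ^ k * (1 / 2 - ε) ^ (n - k)
        else 0) ≤
      Real.exp (l * ((n : ℝ) * (1 / 2 + c) - k)) *
        ((n.choose k : ℝ) * (1 / 2 + ε) ^ k * (1 / 2 - ε) ^ (n - k)) := by
    intro k _
    split
    · rename_i h
      rw [div_le_iff₀ hnpos] at h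
      have h1 : 1 ≤ Real.exp (l * ((n : ℝ) * (1 / 2 + c) - k)) := by
        apply Real.one_le_exp
        apply mul_nonneg hl0
        nlinarith
      exact le_mul_of_one_le_left (hterm k) h1
    · exact mul_nonneg (Real.exp_nonneg _) (hterm k)
  -- sum of the Chernoff bounds
  have hsum : ∑ k ∈ Finset.range (n + 1),
      Real.exp (l * ((n : ℝ) * (1 / 2 + c) - k)) *
        ((n.choose k : ℝ) * (1 / 2 + ε) ^ k * (1 / 2 - ε) ^ (n - k)) =
      Real.exp (l * ((n : ℝ) * (1 / 2 + c))) *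
        ((1 / 2 + ε) * Real.exp (-l) + (1 / 2 - ε)) ^ n := by
    rw [add_pow, Finset.mul_sum]
    apply Finset.sum_congr rfl
    intro k _
    rw [mul_pow,
      show l * ((n : ℝ) * (1 / 2 + c) - k) = l * ((n : ℝ) * (1 / 2 + c)) + (k : ℝ) * (-l)
        by ring,
      Real.exp_add, Real.exp_nat_mul]
    ring
  have hmgf := mgf_bound ε hε0 hε1 l hl0
  have hbase0 : 0 ≤ (1 / 2 + ε) * Real.exp (-l) + (1 / 2 - ε) := by
    have := Real.exp_pos (-l)
    nlinarith
  have hS1 : (∑ k ∈ Finset.range (n + 1),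
      if (k : ℝ) / n ≤ 1 / 2 + c then
        (n.choose k : ℝ) * (1 / 2 + ε) ^ k * (1 / 2 - ε) ^ (n - k)
      else 0) ≤ δ ^ 2 := by
    calc (∑ k ∈ Finset.range (n + 1),
        if (k : ℝ) / n ≤ 1 / 2 + c then
          (n.choose k : ℝ) * (1 / 2 + ε) ^ k * (1 / 2 - ε) ^ (n - k)
        else 0)
        ≤ ∑ k ∈ Finset.range (n + 1),
            Real.exp (l * ((n : ℝ) * (1 / 2 + c) - k)) *
              ((n.choose k : ℝ) * (1 / 2 + ε) ^ k * (1 / 2 - ε) ^ (n - k)) :=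
          Finset.sum_le_sum hM
      _ = Real.exp (l * ((n : ℝ) * (1 / 2 + c))) *
            ((1 / 2 + ε) * Real.exp (-l) + (1 / 2 - ε)) ^ n := hsum
      _ ≤ Real.exp (l * ((n : ℝ) * (1 / 2 + c))) *
            Real.exp (-(1 / 2 + ε) * l + l ^ 2 / 8) ^ n := by
          apply mul_le_mul_of_nonneg_left _ (Real.exp_nonneg _)
          exact pow_le_pow_left₀ hbase0 hmgf n
      _ = Real.exp (l * ((n : ℝ) * (1 / 2 + c)) + (n : ℝ) * (-(1 / 2 + ε) * l + l ^ 2 / 8)) := by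
          rw [← Real.exp_nat_mul, ← Real.exp_add]
      _ = Real.exp (-(2 * ((n : ℝ) * (ε - c) ^ 2))) := by
          congr 1
          rw [hl_def]; ring
      _ ≤ Real.exp (-(2 * L)) := by
          apply Real.exp_le_exp.mpr
          rw [neg_le_neg_iff]
          nlinarith [mul_le_mul_of_nonneg_left
            (mul_self_le_mul_self (show (0:ℝ) ≤ ε / 2 by linarith)
              (show ε / 2 ≤ ε - c by linarith)) (le_of_lt hnpos), hkey]
      _ = δ ^ 2 := by
          rw [hL_def, one_div, Real.log_inv,
            show -(2 * -Real.log δ) = Real.log δ + Real.log δ by ring,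
            Real.exp_add, Real.exp_log hδ0]
          ring
  have hδsq : δ ^ 2 ≤ δ := by nlinarith
  refine ⟨⟨hS1, hδsq⟩, ?_⟩
  -- total probability is 1
  have htot : ∑ k ∈ Finset.range (n + 1),
      (n.choose k : ℝ) * (1 / 2 + ε) ^ k * (1 / 2 - ε) ^ (n - k) = 1 := by
    have h := add_pow (1 / 2 + ε) (1 / 2 - ε) n
    rw [show ((1:ℝ) / 2 + ε) + (1 / 2 - ε) = 1 by ring, one_pow] at h
    calc ∑ k ∈ Finset.range (n + 1),
        (n.choose k : ℝ) * (1 / 2 + ε) ^ k * (1 / 2 - ε) ^ (n - k)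
        = ∑ k ∈ Finset.range (n + 1),
            (1 / 2 + ε) ^ k * (1 / 2 - ε) ^ (n - k) * (n.choose k : ℝ) := by
          apply Finset.sum_congr rfl; intro k _; ring
      _ = 1 := h.symm
  have hsplit : (∑ k ∈ Finset.range (n + 1),
      if 1 / 2 + c < (k : ℝ) / n then
        (n.choose k : ℝ) * (1 / 2 + ε) ^ k * (1 / 2 - ε) ^ (n - k)
      else 0) =
      (∑ k ∈ Finset.range (n + 1),
        (n.choose k : ℝ) * (1 / 2 + ε) ^ k * (1 / 2 - ε) ^ (n - k)) -
      ∑ k ∈ Finset.range (n + 1),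
        if (k : ℝ) / n ≤ 1 / 2 + c then
          (n.choose k : ℝ) * (1 / 2 + ε) ^ k * (1 / 2 - ε) ^ (n - k)
        else 0 := by
    rw [← Finset.sum_sub_distrib]
    apply Finset.sum_congr rfl
    intro k _
    rcases le_or_gt ((k : ℝ) / n) (1 / 2 + c) with h | h
    · rw [if_neg (not_lt.mpr h), if_pos h]; ring
    · rw [if_pos h, if_neg (not_le.mpr h)]; ring
  rw [hsplit, htot]
  linarith
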